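/- arXiv:2104.10632 — 6 statements merged into one kernel-verified Lean document; each statement's English description precedes it below -/
import Mathlib

section
/- Let G be a group and G₀ a subgroup of G of finite index. Then G is quasi-simple if and only if G₀ is quasi-simple (as a group in its own right). -/
/-- A group `G` is *quasi-simple* if it has no abelian subgroup of finite index,
and for every infinite subgroup `H` of infinite index, the normalizer of `H`
has infinite index in `G`.  (Index `0` means infinite index.) -/
def IsQuasiSimple (G : Type*) [Group G] : Prop :=
  (∀ H : Subgroup G, (∀ x ∈ H, ∀ y ∈ H, x * y = y * x) → H.index = 0) ∧
  (∀ H : Subgroup G, Infinite H → H.index = 0 → (Subgroup.normalizer (H : Set G)).index = 0)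

section Aux

variable {G : Type*} [Group G]

/-- A finite-index subgroup of an infinite group is infinite. -/
lemma aux_infinite_of_index_ne_zero {Γ : Type*} [Group Γ] [Infinite Γ]
    (K : Subgroup Γ) (hK : K.index ≠ 0) : Infinite K := by
  have h := K.card_mul_index
  have hc : Nat.card Γ = 0 := Nat.card_eq_zero_of_infinite
  rw [hc] at h
  rcases Nat.mul_eq_zero.mp h with h0 | h0
  · rcases Nat.card_eq_zero.mp h0 with h1 | h1
    · exact (h1.false (⟨1, K.one_mem⟩ : K)).elim
    · exact h1
  · exact absurd h0 hK

lemma aux_normalizer_le_map (G₀ : Subgroup G) (H : Subgroup G₀) :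
    Subgroup.normalizer (H : Set G₀) ≤ (Subgroup.normalizer ((H.map G₀.subtype : Subgroup G) : Set G)).subgroupOf G₀ := by
  intro x hx
  rw [Subgroup.mem_subgroupOf, Subgroup.mem_normalizer_iff]
  intro g
  constructor
  · rintro ⟨h, hh, rfl⟩
    exact ⟨x * h * x⁻¹, (Subgroup.mem_normalizer_iff.mp hx h).mp hh, by
      simp only [Subgroup.coe_subtype]; push_cast; ring⟩
  · rintro ⟨k, hk, hkeq⟩
    simp only [Subgroup.coe_subtype] at hkeq
    refine ⟨x⁻¹ * k * x, ?_, ?_⟩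
    · exact (Subgroup.mem_normalizer_iff.mp hx (x⁻¹ * k * x)).mpr (by
        have : x * (x⁻¹ * k * x) * x⁻¹ = k := by group
        rw [this]; exact hk)
    · simp only [Subgroup.coe_subtype]
      push_cast
      rw [hkeq]
      group

lemma aux_normalizer_le_subgroupOf (G₀ H : Subgroup G) :
    (Subgroup.normalizer (H : Set G)).subgroupOf G₀ ≤ Subgroup.normalizer ((H.subgroupOf G₀ : Subgroup G₀) : Set G₀) := by
  intro x hx
  rw [Subgroup.mem_subgroupOf] at hx
  rw [Subgroup.mem_normalizer_iff]
  intro h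
  simp only [Subgroup.mem_subgroupOf]
  have := Subgroup.mem_normalizer_iff.mp hx (h : G)
  simpa using this

end Aux

theorem quasiSimple_iff_of_finiteIndex {G : Type*} [Group G] (G₀ : Subgroup G)
    (hG₀ : G₀.index ≠ 0) :
    IsQuasiSimple G ↔ IsQuasiSimple G₀ := by
  constructor
  · rintro ⟨h1, h2⟩
    constructor
    · -- abelian condition for G₀
      intro H hab
      set H' := H.map G₀.subtype with hH'
      have hab' : ∀ x ∈ H', ∀ y ∈ H', x * y = y * x := by
        rintro x ⟨a, ha, rfl⟩ y ⟨b, hb, rfl⟩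
        have := hab a ha b hb
        rw [← map_mul, ← map_mul, this]
      have hidx : H'.index = 0 := h1 H' hab'
      have hrel : H'.relIndex G₀ * G₀.index = H'.index :=
        Subgroup.relIndex_mul_index (Subgroup.map_subtype_le H)
      have hsub : H'.subgroupOf G₀ = H :=
        Subgroup.comap_map_eq_self_of_injective G₀.subtype_injective H
      have : H.index * G₀.index = 0 := by
        rw [← hsub]
        rw [hidx] at hrel
        exact hrel
      exact (Nat.mul_eq_zero.mp this).resolve_right hG₀
    · -- normalizer condition for G₀
      intro H hinf hidx
      set H' := H.map G₀.subtype with hH'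
      have hinf' : Infinite H' :=
        Infinite.of_injective _ (H.equivMapOfInjective G₀.subtype G₀.subtype_injective).injective
      have hsub : H'.subgroupOf G₀ = H :=
        Subgroup.comap_map_eq_self_of_injective G₀.subtype_injective H
      have hidx' : H'.index = 0 := by
        have hrel : H'.relIndex G₀ * G₀.index = H'.index :=
          Subgroup.relIndex_mul_index (Subgroup.map_subtype_le H)
        have : H'.relIndex G₀ = 0 := by
          show (H'.subgroupOf G₀).index = 0
          rw [hsub]; exact hidx
        rw [this, zero_mul] at hrel
        exact hrel.symm
      have hn : (Subgroup.normalizer (H' : Set G)).index = 0 := h2 H' hinf' hidx'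
      by_contra hne
      have hle : (Subgroup.normalizer (H : Set G₀)) ≤ (Subgroup.normalizer (H' : Set G)).subgroupOf G₀ := aux_normalizer_le_map G₀ H
      have hdvd : ((Subgroup.normalizer (H' : Set G)).subgroupOf G₀).index ∣ (Subgroup.normalizer (H : Set G₀)).index :=
        Subgroup.index_dvd_of_le hle
      have hrelne : (Subgroup.normalizer (H' : Set G)).relIndex G₀ ≠ 0 := fun h0 => hne (by
        have := hdvd
        rw [show ((Subgroup.normalizer (H' : Set G)).subgroupOf G₀).index = (Subgroup.normalizer (H' : Set G)).relIndex G₀ from rfl, h0]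
          at this
        exact Nat.eq_zero_of_zero_dvd this)
      have hinf_idx : ((Subgroup.normalizer (H' : Set G)) ⊓ G₀).index ≠ 0 := by
        have heq : ((Subgroup.normalizer (H' : Set G)) ⊓ G₀).relIndex G₀ * G₀.index = ((Subgroup.normalizer (H' : Set G)) ⊓ G₀).index :=
          Subgroup.relIndex_mul_index inf_le_right
        rw [Subgroup.inf_relIndex_right] at heq
        rw [← heq]
        exact Nat.mul_ne_zero hrelne hG₀
      exact hinf_idx (Nat.eq_zero_of_zero_dvd
        (hn ▸ Subgroup.index_dvd_of_le (inf_le_left : (Subgroup.normalizer (H' : Set G)) ⊓ G₀ ≤ (Subgroup.normalizer (H' : Set G)))))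
  · rintro ⟨h1, h2⟩
    constructor
    · -- abelian condition for G
      intro H hab
      by_contra h0
      have habK : ∀ x ∈ H.subgroupOf G₀, ∀ y ∈ H.subgroupOf G₀, x * y = y * x := by
        intro x hx y hy
        rw [Subgroup.mem_subgroupOf] at hx hy
        exact Subtype.ext (hab _ hx _ hy)
      have hK : H.relIndex G₀ = 0 := h1 (H.subgroupOf G₀) habK
      have hne : (H ⊓ G₀).index ≠ 0 := Subgroup.index_inf_ne_zero h0 hG₀
      have heq : (H ⊓ G₀).relIndex G₀ * G₀.index = (H ⊓ G₀).index :=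
        Subgroup.relIndex_mul_index inf_le_right
      rw [Subgroup.inf_relIndex_right, hK, zero_mul] at heq
      exact hne heq.symm
    · -- normalizer condition for G
      intro H hinf hidx
      set K := H.subgroupOf G₀ with hK
      -- K has infinite index in G₀
      have hKidx : K.index = 0 := by
        by_contra hne
        have heq : (H ⊓ G₀).relIndex G₀ * G₀.index = (H ⊓ G₀).index :=
          Subgroup.relIndex_mul_index inf_le_right
        rw [Subgroup.inf_relIndex_right] at heq
        have h1' : (H ⊓ G₀).index ≠ 0 := by
          rw [← heq]; exact Nat.mul_ne_zero hne hG₀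
        exact h1' (Nat.eq_zero_of_zero_dvd
          (hidx ▸ Subgroup.index_dvd_of_le (inf_le_left : H ⊓ G₀ ≤ H)))
      -- K is infinite
      have hKinf : Infinite K := by
        have hLidx : (G₀.subgroupOf H).index ≠ 0 := fun h0 =>
          hG₀ (Subgroup.index_eq_zero_of_relIndex_eq_zero h0)
        have hLinf : Infinite (G₀.subgroupOf H) :=
          aux_infinite_of_index_ne_zero _ hLidx
        have e1 : Infinite ((G₀.subgroupOf H).map H.subtype) :=
          Infinite.of_injective _
            ((G₀.subgroupOf H).equivMapOfInjective H.subtype H.subtype_injective).injective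
        rw [Subgroup.subgroupOf_map_subtype, inf_comm] at e1
        rw [← Subgroup.subgroupOf_map_subtype H G₀] at e1
        exact Infinite.of_injective _
          ((K.equivMapOfInjective G₀.subtype G₀.subtype_injective).symm.injective)
      have hn : (Subgroup.normalizer (K : Set G₀)).index = 0 := h2 K hKinf hKidx
      by_contra hne
      have hinf_idx : ((Subgroup.normalizer (H : Set G)) ⊓ G₀).index ≠ 0 := Subgroup.index_inf_ne_zero hne hG₀
      have hrelne : (Subgroup.normalizer (H : Set G)).relIndex G₀ ≠ 0 := by
        intro h0
        have heq : ((Subgroup.normalizer (H : Set G)) ⊓ G₀).relIndex G₀ * G₀.index = ((Subgroup.normalizer (H : Set G)) ⊓ G₀).index :=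
          Subgroup.relIndex_mul_index inf_le_right
        rw [Subgroup.inf_relIndex_right, h0, zero_mul] at heq
        exact hinf_idx heq.symm
      have hle : (Subgroup.normalizer (H : Set G)).subgroupOf G₀ ≤ (Subgroup.normalizer (K : Set G₀)) :=
        aux_normalizer_le_subgroupOf G₀ H
      exact hrelne (Nat.eq_zero_of_zero_dvd (hn ▸ Subgroup.index_dvd_of_le hle))
end

section
/- Let G be a group and Z a finite normal subgroup of G. Then G is quasi-simple if and only if the quotient group G/Z is quasi-simple. -/
open scoped commutatorElement


section Aux

variable {G : Type*} [Group G]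

private lemma QS.index_zero_of_le {H K : Subgroup G} (h : H ≤ K) (hK : K.index = 0) :
    H.index = 0 := by
  have := Subgroup.relIndex_mul_index h
  rw [hK, mul_zero] at this
  exact this.symm

private lemma QS.infinite_of_index_ne_zero [Infinite G] {H : Subgroup G} (h : H.index ≠ 0) :
    Infinite H := by
  by_contra hfin
  have hf : Finite H := not_infinite_iff_finite.mp hfin
  have hcard : Nat.card H ≠ 0 := Nat.card_ne_zero.mpr ⟨⟨1⟩, hf⟩
  have hmc := Subgroup.index_mul_card H
  rw [(Nat.card_eq_zero_of_infinite : Nat.card G = 0)] at hmc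
  exact (mul_ne_zero h hcard) hmc

private lemma QS.relindex_sup_ne_zero (Z H : Subgroup G) [Z.Normal] (hZ : Finite Z) :
    H.relIndex (H ⊔ Z) ≠ 0 := by
  have hfin : Finite ((H ⊔ Z : Subgroup G) ⧸ H.subgroupOf (H ⊔ Z)) := by
    refine Finite.of_surjective
      (fun z : Z => QuotientGroup.mk ⟨(z : G), Subgroup.mem_sup_right z.2⟩) ?_
    intro q
    induction q using QuotientGroup.induction_on with
    | H x =>
      have hx : (x : G) ∈ (Z ⊔ H : Subgroup G) := by
        rw [sup_comm]; exact x.2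
      rw [← SetLike.mem_coe, Subgroup.normal_mul] at hx
      obtain ⟨z, hz, h, hh, hzh⟩ := hx
      refine ⟨⟨z, hz⟩, ?_⟩
      have : (⟨z, Subgroup.mem_sup_right hz⟩ : (H ⊔ Z : Subgroup G)) ⁻¹ * x
          ∈ H.subgroupOf (H ⊔ Z) := by
        rw [Subgroup.mem_subgroupOf]
        show z⁻¹ * (x : G) ∈ H
        rw [← hzh, ← mul_assoc, inv_mul_cancel, one_mul]
        exact hh
      exact (QuotientGroup.eq).mpr this
  exact Nat.card_ne_zero.mpr ⟨inferInstance, hfin⟩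

private lemma QS.sup_index_zero (Z H : Subgroup G) [Z.Normal] (hZ : Finite Z)
    (h : H.index = 0) : (H ⊔ Z).index = 0 := by
  have hm := Subgroup.relIndex_mul_index (le_sup_left : H ≤ H ⊔ Z)
  rw [h] at hm
  rcases mul_eq_zero.mp hm with h' | h'
  · exact absurd h' (QS.relindex_sup_ne_zero Z H hZ)
  · exact h'

private lemma QS.closure_comm {s : Set G} (h : ∀ a ∈ s, ∀ b ∈ s, a * b = b * a) :
    ∀ a ∈ Subgroup.closure s, ∀ b ∈ Subgroup.closure s, a * b = b * a := by
  have h1 : Subgroup.closure s ≤ Subgroup.centralizer s := by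
    rw [Subgroup.closure_le]
    intro a ha
    exact Subgroup.mem_centralizer_iff.mpr fun b hb => h b hb a ha
  have h2 : Subgroup.closure s ≤ Subgroup.centralizer (Subgroup.closure s : Set G) := by
    rw [Subgroup.closure_le]
    intro a ha
    refine Subgroup.mem_centralizer_iff.mpr fun b hb => ?_
    exact (Subgroup.mem_centralizer_iff.mp (h1 hb) a ha).symm
  intro a ha b hb
  exact (Subgroup.mem_centralizer_iff.mp (h2 hb) a ha)

variable {Q : Type*} [Group Q]

private lemma QS.finite_of_finite_map (π : G →* Q) (hker : Finite π.ker) (H : Subgroup G)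
    (hmap : Finite (H.map π)) : Finite H := by
  set f := π.subgroupMap H with hf
  have hkf : Finite f.ker := by
    refine Finite.of_injective (fun x : f.ker => (⟨(x.1 : G), ?_⟩ : π.ker)) ?_
    · have := x.2
      rw [MonoidHom.mem_ker] at this
      have hv : π (x.1 : G) = 1 := congrArg Subtype.val this
      exact MonoidHom.mem_ker.mpr hv
    · intro a b hab
      simp only [Subtype.mk.injEq] at hab
      exact Subtype.ext (Subtype.ext hab)
  have hidx : f.ker.index ≠ 0 := by
    rw [Subgroup.index_ker]
    exact Nat.card_ne_zero.mpr ⟨⟨1⟩, inferInstance⟩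
  have hcard : Nat.card f.ker ≠ 0 := Nat.card_ne_zero.mpr ⟨⟨1⟩, hkf⟩
  have := Subgroup.index_mul_card f.ker
  have hne : Nat.card H ≠ 0 := this ▸ mul_ne_zero hidx hcard
  exact (Nat.card_ne_zero.mp hne).2

private lemma QS.comap_normalizer (π : G →* Q) (hs : Function.Surjective π) (K : Subgroup Q) :
    (Subgroup.normalizer (K : Set Q)).comap π = Subgroup.normalizer ((K.comap π : Subgroup G) : Set G) := by
  ext g
  simp only [Subgroup.mem_comap, Subgroup.mem_normalizer_iff]
  constructor
  · intro h n
    simp only [Subgroup.mem_comap, map_mul, map_inv]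
    exact h (π n)
  · intro h q
    obtain ⟨n, rfl⟩ := hs q
    have := h n
    simp only [Subgroup.mem_comap, map_mul, map_inv] at this
    exact this

/-- Key construction: if `C` is an infinite subgroup centralizing a finite normal subgroup `Z`
with all commutators of `C` landing in `Z`, then there is an infinite abelian subgroup of `C`
normalized by `C`. -/
private lemma QS.exists_infinite_abelian (Z C : Subgroup G) (hZfin : Finite Z)
    (hCinf : Infinite C)
    (pC1 : ∀ c ∈ C, ∀ z ∈ Z, c * z = z * c)
    (pC2 : ∀ x ∈ C, ∀ y ∈ C, ⁅x, y⁆ ∈ Z) :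
    ∃ M : Subgroup G, (∀ x ∈ M, ∀ y ∈ M, x * y = y * x) ∧ Infinite M ∧
      C ≤ (Subgroup.normalizer (M : Set G)) := by
  classical
  -- the set of abelian subgroups of `C` containing `Z ⊓ C`
  set S : Set (Subgroup G) :=
    {M | M ≤ C ∧ (∀ x ∈ M, ∀ y ∈ M, x * y = y * x) ∧ Z ⊓ C ≤ M} with hS
  have hbase : Z ⊓ C ∈ S := by
    refine ⟨inf_le_right, ?_, le_rfl⟩
    intro x hx y hy
    exact pC1 x hx.2 y hy.1
  have hchain : ∀ c ⊆ S, IsChain (· ≤ ·) c → ∀ y ∈ c, ∃ ub ∈ S, ∀ z ∈ c, z ≤ ub := by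
    intro c hcS hc y hy
    refine ⟨sSup c, ⟨?_, ?_, ?_⟩, fun z hz => le_sSup hz⟩
    · exact sSup_le fun s hs => (hcS hs).1
    · intro a ha b hb
      rw [Subgroup.mem_sSup_of_directedOn ⟨y, hy⟩ hc.directedOn] at ha hb
      obtain ⟨s, hs, has⟩ := ha
      obtain ⟨t, ht, hbt⟩ := hb
      rcases hc.total hs ht with hst | hts
      · exact (hcS ht).2.1 a (hst has) b hbt
      · exact (hcS hs).2.1 a has b (hts hbt)
    · exact le_trans (hcS hy).2.2 (le_sSup hy)
  obtain ⟨M, -, hM⟩ := zorn_le_nonempty₀ S hchain (Z ⊓ C) hbase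
  obtain ⟨hMC, hMab, hZCM⟩ := hM.1
  -- M is infinite
  have hMinf : Infinite M := by
    by_contra hfin
    have hMfin : Finite M := not_infinite_iff_finite.mp hfin
    -- for each m in M, the commutator map is a homomorphism C →* G with finite-index kernel
    have hhom : ∀ m : M, ∀ a b : C, ⁅((a * b : C) : G), (m : G)⁆
        = ⁅(a : G), (m : G)⁆ * ⁅(b : G), (m : G)⁆ := by
      intro m a b
      have hmC : (m : G) ∈ C := hMC m.2
      have hbz : ⁅(b : G), (m : G)⁆ ∈ Z := pC2 _ b.2 _ hmC
      have haz : ⁅(a : G), (m : G)⁆ ∈ Z := pC2 _ a.2 _ hmC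
      have haC : ⁅(a : G), (m : G)⁆ ∈ C :=
        mul_mem (mul_mem (mul_mem a.2 hmC) (inv_mem a.2)) (inv_mem hmC)
      calc ⁅((a : G) * b), (m : G)⁆
          = (a : G) * ⁅(b : G), (m : G)⁆ * (a : G)⁻¹ * ⁅(a : G), (m : G)⁆ := by group
        _ = ⁅(b : G), (m : G)⁆ * (a : G) * (a : G)⁻¹ * ⁅(a : G), (m : G)⁆ := by
              rw [pC1 _ a.2 _ hbz]
        _ = ⁅(b : G), (m : G)⁆ * ⁅(a : G), (m : G)⁆ := by group
        _ = ⁅(a : G), (m : G)⁆ * ⁅(b : G), (m : G)⁆ := (pC1 _ haC _ hbz).symm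
    set F : M → (C →* G) := fun m =>
      MonoidHom.mk' (fun x : C => ⁅(x : G), (m : G)⁆) (hhom m) with hF
    have hkeridx : ∀ m : M, (F m).ker.index ≠ 0 := by
      intro m
      rw [Subgroup.index_ker]
      refine Nat.card_ne_zero.mpr ⟨⟨1⟩, ?_⟩
      refine Finite.of_injective (fun r : (F m).range => (⟨(r : G), ?_⟩ : Z)) ?_
      · obtain ⟨x, hx⟩ := r.2
        rw [← hx]
        exact pC2 _ x.2 _ (hMC m.2)
      · intro a b hab
        simp only [Subtype.mk.injEq] at hab
        exact Subtype.ext hab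
    have hTidx : (⨅ m : M, (F m).ker).index ≠ 0 := Subgroup.index_iInf_ne_zero hkeridx
    haveI : Infinite C := hCinf
    have hTinf : Infinite (⨅ m : M, (F m).ker : Subgroup C) :=
      QS.infinite_of_index_ne_zero hTidx
    -- every element of T lies in M by maximality
    have hmem : ∀ x : (⨅ m : M, (F m).ker : Subgroup C), ((x : C) : G) ∈ M := by
      intro x
      have hxC : ((x : C) : G) ∈ C := (x : C).2
      have hcomm : ∀ m ∈ M, ((x : C) : G) * m = m * ((x : C) : G) := by
        intro m hm
        have hxk : (x : C) ∈ (F ⟨m, hm⟩).ker := Subgroup.mem_iInf.mp x.2 ⟨m, hm⟩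
        rw [MonoidHom.mem_ker] at hxk
        have : ⁅((x : C) : G), m⁆ = 1 := hxk
        exact (commutatorElement_eq_one_iff_commute.mp this).eq
      -- the subgroup generated by M and x is abelian
      set M' := M ⊔ Subgroup.closure {((x : C) : G)} with hM'
      have hM'eq : M' = Subgroup.closure ((M : Set G) ∪ {((x : C) : G)}) := by
        rw [Subgroup.closure_union, Subgroup.closure_eq]
      have hM'S : M' ∈ S := by
        refine ⟨?_, ?_, le_trans hZCM le_sup_left⟩
        · refine sup_le hMC ?_
          rw [Subgroup.closure_le]
          intro a ha
          rw [Set.mem_singleton_iff] at ha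
          exact ha ▸ hxC
        · rw [hM'eq]
          refine QS.closure_comm ?_
          rintro a (ha | ha) b (hb | hb)
          · exact hMab a ha b hb
          · rw [Set.mem_singleton_iff] at hb
            exact hb ▸ (hcomm a ha).symm
          · rw [Set.mem_singleton_iff] at ha
            exact ha ▸ (hcomm b hb)
          · rw [Set.mem_singleton_iff] at ha hb
            rw [ha, hb]
      have hle : M' ≤ M := hM.2 hM'S le_sup_left
      exact hle (le_sup_right (α := Subgroup G)
        (Subgroup.subset_closure (Set.mem_singleton _)))
    have hinj : Function.Injective
        (fun x : (⨅ m : M, (F m).ker : Subgroup C) => (⟨((x : C) : G), hmem x⟩ : M)) := by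
      intro a b hab
      simp only [Subtype.mk.injEq] at hab
      exact Subtype.ext (Subtype.ext hab)
    exact absurd (Finite.of_injective _ hinj) (not_finite_iff_infinite.mpr hTinf)
  -- C normalizes M
  have hnorm : C ≤ (Subgroup.normalizer (M : Set G)) := by
    intro c hc
    have key : ∀ d ∈ C, ∀ m ∈ M, d * m * d⁻¹ ∈ M := by
      intro d hd m hm
      have hmC : m ∈ C := hMC hm
      have h1 : ⁅d, m⁆ ∈ Z := pC2 d hd m hmC
      have h2 : ⁅d, m⁆ ∈ C := mul_mem (mul_mem (mul_mem hd hmC) (inv_mem hd)) (inv_mem hmC)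
      have h3 : ⁅d, m⁆ ∈ Z ⊓ C := ⟨h1, h2⟩
      have h4 : ⁅d, m⁆ * m ∈ M := mul_mem (hZCM h3) hm
      have : d * m * d⁻¹ = ⁅d, m⁆ * m := by group
      exact this ▸ h4
    rw [Subgroup.mem_normalizer_iff]
    intro h
    constructor
    · intro hh; exact key c hc h hh
    · intro hh
      have := key c⁻¹ (inv_mem hc) _ hh
      simpa [mul_assoc] using this
  exact ⟨M, hMab, hMinf, hnorm⟩

end Aux

theorem quasiSimple_iff_quotient_of_finite_normal {G : Type*} [Group G]
    (Z : Subgroup G) [Z.Normal] (hZ : Finite Z) :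
    IsQuasiSimple G ↔ IsQuasiSimple (G ⧸ Z) := by
  haveI := hZ
  set π := QuotientGroup.mk' Z with hπ
  have hsurj : Function.Surjective π := QuotientGroup.mk'_surjective Z
  have hker : π.ker = Z := QuotientGroup.ker_mk' Z
  have hkerfin : Finite π.ker := by rw [hker]; exact hZ
  constructor
  · rintro ⟨hG1, hG2⟩
    -- G is infinite
    have hbot : (⊥ : Subgroup G).index = 0 := by
      refine hG1 ⊥ ?_
      intro x hx y hy
      rw [Subgroup.mem_bot] at hx hy
      rw [hx, hy]
    have hGinf : Infinite G := by
      rw [Subgroup.index_bot] at hbot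
      rcases Nat.card_eq_zero.mp hbot with h | h
      · exact absurd ⟨(1 : G)⟩ (not_nonempty_iff.mpr h)
      · exact h
    constructor
    · -- no abelian subgroup of finite index in G/Z
      intro A hAab
      by_contra hA
      set K := A.comap π with hK
      have hKidx : K.index ≠ 0 := by
        rw [hK, Subgroup.index_comap_of_surjective A hsurj]
        exact hA
      -- the kernel of the conjugation action on Z
      haveI : Finite (MulAut Z) :=
        Finite.of_injective (fun e : Z ≃* Z => (e : Z → Z)) DFunLike.coe_injective
      set φ : G →* MulAut Z := MulAut.conjNormal with hφ
      have hN0idx : φ.ker.index ≠ 0 := by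
        rw [Subgroup.index_ker]
        exact Nat.card_ne_zero.mpr ⟨⟨1⟩, inferInstance⟩
      set C := K ⊓ φ.ker with hC
      have hCidx : C.index ≠ 0 := Subgroup.index_inf_ne_zero hKidx hN0idx
      have pC1 : ∀ c ∈ C, ∀ z ∈ Z, c * z = z * c := by
        intro c hc z hz
        have h1 : φ c = 1 := MonoidHom.mem_ker.mp hc.2
        have h2 : ((φ c) ⟨z, hz⟩ : G) = z := by rw [h1]; rfl
        rw [hφ, MulAut.conjNormal_apply] at h2
        have := congrArg (fun w => w * c) h2
        simpa [mul_assoc] using this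
      have pC2 : ∀ x ∈ C, ∀ y ∈ C, ⁅x, y⁆ ∈ Z := by
        intro x hx y hy
        have hxA : π x ∈ A := Subgroup.mem_comap.mp hx.1
        have hyA : π y ∈ A := Subgroup.mem_comap.mp hy.1
        have : π ⁅x, y⁆ = 1 := by
          rw [map_commutatorElement]
          exact commutatorElement_eq_one_iff_commute.mpr (hAab _ hxA _ hyA)
        rw [← hker]
        exact MonoidHom.mem_ker.mpr this
      have hCinf : Infinite C := QS.infinite_of_index_ne_zero hCidx
      obtain ⟨M, hMab, hMinf, hMnorm⟩ := QS.exists_infinite_abelian Z C hZ hCinf pC1 pC2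
      have hMidx : M.index = 0 := hG1 M hMab
      have hNidx : (Subgroup.normalizer (M : Set G)).index = 0 := hG2 M hMinf hMidx
      exact hCidx (QS.index_zero_of_le hMnorm hNidx)
    · -- infinite subgroups of infinite index in G/Z
      intro K hKinf hKidx
      set H := K.comap π with hH
      have hHidx : H.index = 0 := by
        rw [hH, Subgroup.index_comap_of_surjective K hsurj]; exact hKidx
      have hHinf : Infinite H := by
        by_contra hfin
        have hHfin : Finite H := not_infinite_iff_finite.mp hfin
        have : Finite (H.map π) := Finite.of_surjective _ (MonoidHom.subgroupMap_surjective π H)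
        rw [hH, Subgroup.map_comap_eq_self_of_surjective hsurj] at this
        exact absurd this (not_finite_iff_infinite.mpr hKinf)
      have hN := hG2 H hHinf hHidx
      have : (Subgroup.normalizer (K : Set (G ⧸ Z))).index = ((Subgroup.normalizer (K : Set (G ⧸ Z))).comap π).index :=
        (Subgroup.index_comap_of_surjective _ hsurj).symm
      rw [this, QS.comap_normalizer π hsurj K]
      exact hN
  · rintro ⟨hQ1, hQ2⟩
    constructor
    · -- abelian subgroups of G have infinite index
      intro A hAab
      have hmapab : ∀ u ∈ A.map π, ∀ v ∈ A.map π, u * v = v * u := by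
        intro u hu v hv
        obtain ⟨a, ha, rfl⟩ := Subgroup.mem_map.mp hu
        obtain ⟨b, hb, rfl⟩ := Subgroup.mem_map.mp hv
        rw [← map_mul, ← map_mul, hAab a ha b hb]
      have h1 : (A.map π).index = 0 := hQ1 _ hmapab
      rw [Subgroup.index_map, hker, MonoidHom.range_eq_top.mpr hsurj,
        Subgroup.index_top, mul_one] at h1
      exact QS.index_zero_of_le le_sup_left h1
    · -- infinite subgroups of infinite index in G
      intro H hHinf hHidx
      set K := H.map π with hK
      have hKinf : Infinite K := by
        by_contra hfin
        have : Finite K := not_infinite_iff_finite.mp hfin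
        exact absurd (QS.finite_of_finite_map π hkerfin H this)
          (not_finite_iff_infinite.mpr hHinf)
      have hKidx : K.index = 0 := by
        rw [hK, Subgroup.index_map, hker, MonoidHom.range_eq_top.mpr hsurj,
          Subgroup.index_top, mul_one]
        exact QS.sup_index_zero Z H hZ hHidx
      have hN := hQ2 K hKinf hKidx
      -- the normalizer of H is contained in the preimage of the normalizer of K
      have hle : (Subgroup.normalizer (H : Set G)) ≤ (Subgroup.normalizer (K : Set (G ⧸ Z))).comap π := by
        intro g hg
        rw [QS.comap_normalizer π hsurj K, hK, Subgroup.comap_map_eq, hker]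
        have key : ∀ d ∈ (Subgroup.normalizer (H : Set G)), ∀ x ∈ H ⊔ Z, d * x * d⁻¹ ∈ H ⊔ Z := by
          intro d hd x hx
          rw [← SetLike.mem_coe, Subgroup.mul_normal] at hx
          obtain ⟨h, hh, z, hz, rfl⟩ := hx
          have h1 : d * h * d⁻¹ ∈ H := (Subgroup.mem_normalizer_iff.mp hd h).mp hh
          have h2 : d * z * d⁻¹ ∈ Z := Subgroup.Normal.conj_mem ‹Z.Normal› z hz d
          have : d * (h * z) * d⁻¹ = (d * h * d⁻¹) * (d * z * d⁻¹) := by group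
          rw [this]
          exact mul_mem (Subgroup.mem_sup_left h1) (Subgroup.mem_sup_right h2)
        rw [Subgroup.mem_normalizer_iff]
        intro x
        constructor
        · exact fun hx => key g hg x hx
        · intro hx
          have := key g⁻¹ (inv_mem hg) _ hx
          simpa [mul_assoc] using this
      have hcomapidx : ((Subgroup.normalizer (K : Set (G ⧸ Z))).comap π).index = 0 := by
        rw [Subgroup.index_comap_of_surjective _ hsurj]; exact hN
      exact QS.index_zero_of_le hle hcomapidx
end

section
/- Let G be a group and G₀ a subgroup of G of finite index. Then G is quasi-semi-simple if and only if G₀ is quasi-semi-simple (as a group in its own right). -/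
/-- A group `G` is *quasi-semi-simple* if it has no abelian subgroup of finite index,
and for every infinite commutative subgroup `H` of infinite index, the normalizer
of `H` has infinite index in `G`.  (Index `0` means infinite index.) -/
def IsQuasiSemiSimple (G : Type*) [Group G] : Prop :=
  (∀ H : Subgroup G, (∀ x ∈ H, ∀ y ∈ H, x * y = y * x) → H.index = 0) ∧
  (∀ H : Subgroup G, (∀ x ∈ H, ∀ y ∈ H, x * y = y * x) → Infinite H → H.index = 0 →
    (Subgroup.normalizer (H : Set G)).index = 0)

open Subgroup

private lemma relindex_eq_zero_of_index_eq_zero' {G : Type*} [Group G] {N K : Subgroup G}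
    (hK : K.index ≠ 0) (hN : N.index = 0) : N.relIndex K = 0 := by
  by_contra h
  have hK' : K.relIndex ⊤ ≠ 0 := by rwa [relIndex_top_right]
  have := relIndex_ne_zero_trans h hK'
  rw [relIndex_top_right] at this
  exact this hN

private lemma index_map_subtype' {G : Type*} [Group G] (G₀ : Subgroup G) (H : Subgroup G₀) :
    (H.map G₀.subtype).index = H.index * G₀.index := by
  rw [index_map, ker_subtype, sup_bot_eq, range_subtype]

private lemma infinite_subgroupOf_of_relindex_ne_zero {G : Type*} [Group G]
    (C K : Subgroup G) [Infinite K] (h : C.relIndex K ≠ 0) : Infinite (C.subgroupOf K) := by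
  by_contra hfin
  rw [not_infinite_iff_finite] at hfin
  have hcard : Nat.card (C.subgroupOf K) * (C.subgroupOf K).index = Nat.card K :=
    Subgroup.card_mul_index _
  have h1 : Nat.card (C.subgroupOf K) ≠ 0 := Nat.card_pos.ne'
  have h2 : (C.subgroupOf K).index ≠ 0 := h
  have : Nat.card K ≠ 0 := hcard ▸ Nat.mul_ne_zero h1 h2
  exact this Nat.card_eq_zero_of_infinite

theorem quasiSemiSimple_iff_of_finiteIndex {G : Type*} [Group G] (G₀ : Subgroup G)
    (hG₀ : G₀.index ≠ 0) :
    IsQuasiSemiSimple G ↔ IsQuasiSemiSimple G₀ := by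
  constructor
  · rintro ⟨h1, h2⟩
    constructor
    · -- no abelian finite-index subgroup of G₀
      intro H hH
      have hab : ∀ x ∈ H.map G₀.subtype, ∀ y ∈ H.map G₀.subtype, x * y = y * x := by
        intro x hx y hy
        rw [mem_map] at hx hy
        obtain ⟨a, ha, rfl⟩ := hx
        obtain ⟨b, hb, rfl⟩ := hy
        rw [← map_mul, ← map_mul, hH a ha b hb]
      have h0 := h1 _ hab
      rw [index_map_subtype'] at h0
      exact (Nat.mul_eq_zero.mp h0).resolve_right hG₀
    · -- normalizer condition for G₀
      intro H hH hInf hidx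
      set H' := H.map G₀.subtype with hH'
      have hab : ∀ x ∈ H', ∀ y ∈ H', x * y = y * x := by
        intro x hx y hy
        rw [hH', mem_map] at hx hy
        obtain ⟨a, ha, rfl⟩ := hx
        obtain ⟨b, hb, rfl⟩ := hy
        rw [← map_mul, ← map_mul, hH a ha b hb]
      have hinf' : Infinite H' :=
        (H.equivMapOfInjective G₀.subtype G₀.subtype_injective).toEquiv.infinite_iff.mp hInf
      have hidx' : H'.index = 0 := by
        rw [hH', index_map_subtype', hidx, zero_mul]
      have hN' : (normalizer (H' : Set G)).index = 0 := h2 H' hab hinf' hidx'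
      have hrel : (normalizer (H' : Set G)).relIndex G₀ = 0 :=
        relindex_eq_zero_of_index_eq_zero' hG₀ hN'
      have hle : (normalizer (H : Set G₀)) ≤ (normalizer (H' : Set G)).subgroupOf G₀ := by
        intro g hg
        rw [mem_subgroupOf, mem_normalizer_iff]
        intro x
        constructor
        · intro hx
          rw [hH', mem_map] at hx
          obtain ⟨a, ha, rfl⟩ := hx
          have : g * a * g⁻¹ ∈ H := (mem_normalizer_iff.mp hg a).mp ha
          exact ⟨g * a * g⁻¹, this, by simp⟩
        · intro hx
          rw [hH', mem_map] at hx
          obtain ⟨a, ha, heq⟩ := hx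
          have hx' : x = ↑(g⁻¹ * a * g) := by
            have : (a : G) = ↑g * x * (↑g)⁻¹ := by simpa using heq
            push_cast
            rw [this]
            group
          have hmem : g⁻¹ * a * g ∈ H := by
            apply (mem_normalizer_iff.mp hg (g⁻¹ * a * g)).mpr
            have : g * (g⁻¹ * a * g) * g⁻¹ = a := by group
            rwa [this]
          rw [hx']
          exact ⟨g⁻¹ * a * g, hmem, by simp⟩
      have hdvd : ((normalizer (H' : Set G)).subgroupOf G₀).index ∣ (normalizer (H : Set G₀)).index :=
        index_dvd_of_le hle
      have : ((normalizer (H' : Set G)).subgroupOf G₀).index = 0 := hrel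
      exact eq_zero_of_zero_dvd (this ▸ hdvd)
  · rintro ⟨h1, h2⟩
    constructor
    · intro K hK
      have hab : ∀ x ∈ K.subgroupOf G₀, ∀ y ∈ K.subgroupOf G₀, x * y = y * x := by
        intro x hx y hy
        refine Subtype.ext ?_
        push_cast
        exact hK _ (mem_subgroupOf.mp hx) _ (mem_subgroupOf.mp hy)
      exact index_eq_zero_of_relIndex_eq_zero (h1 _ hab)
    · intro K hK hInf hidx
      haveI : G₀.FiniteIndex := ⟨hG₀⟩
      set C := G₀.normalCore with hC
      have hCidx : C.index ≠ 0 := FiniteIndex.index_ne_zero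
      set L := (K ⊓ C).subgroupOf G₀ with hL
      have hab : ∀ x ∈ L, ∀ y ∈ L, x * y = y * x := by
        intro x hx y hy
        refine Subtype.ext ?_
        push_cast
        exact hK _ (mem_subgroupOf.mp hx).1 _ (mem_subgroupOf.mp hy).1
      have hrelCK : C.relIndex K ≠ 0 :=
        fun h => hCidx (index_eq_zero_of_relIndex_eq_zero h)
      haveI : Infinite (C.subgroupOf K) :=
        infinite_subgroupOf_of_relindex_ne_zero C K hrelCK
      have hinfL : Infinite L := by
        refine Infinite.of_injective
          (fun x : C.subgroupOf K =>
            (⟨⟨(x : K), G₀.normalCore_le (mem_subgroupOf.mp x.2)⟩,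
              mem_subgroupOf.mpr ⟨(x : K).2, mem_subgroupOf.mp x.2⟩⟩ : L)) ?_
        intro a b h
        apply Subtype.ext
        apply Subtype.ext
        have := congrArg (fun z : L => ((z : G₀) : G)) h
        simpa using this
      have hKC0 : (K ⊓ C).index = 0 :=
        eq_zero_of_zero_dvd (hidx ▸ index_dvd_of_le inf_le_left)
      have hidxL : L.index = 0 :=
        relindex_eq_zero_of_index_eq_zero' hG₀ hKC0
      have hNL : (normalizer (L : Set G₀)).index = 0 := h2 L hab hinfL hidxL
      have hle : (normalizer (K : Set G)).subgroupOf G₀ ≤ (normalizer (L : Set G₀)) := by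
        intro g hg
        have hg' : (g : G) ∈ (normalizer (K : Set G)) := mem_subgroupOf.mp hg
        rw [mem_normalizer_iff]
        intro h
        have hcoe : ((g * h * g⁻¹ : G₀) : G) = ↑g * ↑h * (↑g)⁻¹ := by push_cast; ring_nf
        constructor
        · intro hh
          have hh' := mem_subgroupOf.mp hh
          refine mem_subgroupOf.mpr ?_
          rw [hcoe]
          exact ⟨(mem_normalizer_iff.mp hg' ↑h).mp hh'.1,
            (hC ▸ G₀.normalCore_normal).conj_mem _ hh'.2 _⟩
        · intro hh
          have hh' := mem_subgroupOf.mp hh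
          rw [hcoe] at hh'
          refine mem_subgroupOf.mpr ?_
          constructor
          · exact (mem_normalizer_iff.mp hg' ↑h).mpr hh'.1
          · have := (hC ▸ G₀.normalCore_normal).conj_mem _ hh'.2 (↑g)⁻¹
            have heq : (↑g)⁻¹ * (↑g * ↑h * (↑g)⁻¹) * ((↑g)⁻¹)⁻¹ = (h : G) := by group
            rwa [heq] at this
      have hdvd : (normalizer (L : Set G₀)).index ∣ ((normalizer (K : Set G)).subgroupOf G₀).index :=
        index_dvd_of_le hle
      have hrel : (normalizer (K : Set G)).relIndex G₀ = 0 := eq_zero_of_zero_dvd (hNL ▸ hdvd)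
      exact index_eq_zero_of_relIndex_eq_zero hrel
end

section
/- Let f : G → G₁ be a surjective group homomorphism with finite kernel, and suppose that G₁ has no proper subgroup of finite index. Let G₀ be a subgroup of G of finite index such that |G₀ ∩ Ker f| ≤ |H ∩ Ker f| for every subgroup H of G of finite index. Then G₀ has no proper subgroup of finite index. -/
theorem no_proper_finiteIndex_of_minimal_ker_intersection {G G₁ : Type*} [Group G] [Group G₁]
    (f : G →* G₁) (hf : Function.Surjective f) (hker : Finite f.ker)
    (hG₁ : ∀ K : Subgroup G₁, K.index ≠ 0 → K = ⊤)
    (G₀ : Subgroup G) (hG₀ : G₀.index ≠ 0)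
    (hmin : ∀ H : Subgroup G, H.index ≠ 0 →
      Nat.card ↥(G₀ ⊓ f.ker) ≤ Nat.card ↥(H ⊓ f.ker)) :
    ∀ K : Subgroup G₀, K.index ≠ 0 → K = ⊤ := by
  intro K hK
  set H : Subgroup G := K.map G₀.subtype with hHdef
  have hHle : H ≤ G₀ := by
    rw [hHdef]
    simpa using Subgroup.map_subtype_le K
  have hHindex : H.index ≠ 0 := by
    rw [hHdef, Subgroup.index_map_subtype]
    exact Nat.mul_ne_zero hK hG₀
  -- f(H) has finite index, hence is ⊤
  have hmap : H.map f = ⊤ := by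
    apply hG₁
    intro h0
    have := Subgroup.index_map_dvd (H := H) hf
    rw [h0] at this
    exact hHindex (Nat.eq_zero_of_zero_dvd this)
  -- hence H ⊔ ker f = ⊤
  have hsup : H ⊔ f.ker = ⊤ := by
    have := congrArg (Subgroup.comap f) hmap
    rwa [Subgroup.comap_map_eq, Subgroup.comap_top] at this
  -- minimality: H ⊓ ker f = G₀ ⊓ ker f
  have hle2 : H ⊓ f.ker ≤ G₀ ⊓ f.ker := inf_le_inf_right _ hHle
  have : Finite ↥(G₀ ⊓ f.ker) := Set.Finite.subset (Set.toFinite (f.ker : Set G))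
    (by intro x hx; exact hx.2)
  have heq : H ⊓ f.ker = G₀ ⊓ f.ker :=
    Subgroup.eq_of_le_of_card_ge hle2 (hmin H hHindex)
  have hHeq : H = G₀ := by
    refine le_antisymm hHle fun g hg => ?_
    have hgmem : g ∈ (↑(H ⊔ f.ker) : Set G) := by rw [hsup]; trivial
    rw [Subgroup.mul_normal] at hgmem
    obtain ⟨h, hh, k, hk, rfl⟩ := hgmem
    have hkG₀ : k ∈ G₀ := by
      have : h⁻¹ * (h * k) ∈ G₀ := mul_mem (inv_mem (hHle hh)) hg
      simpa using this
    have : k ∈ G₀ ⊓ f.ker := ⟨hkG₀, hk⟩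
    rw [← heq] at this
    exact mul_mem hh this.1
  have : K.map G₀.subtype = (⊤ : Subgroup G₀).map G₀.subtype := by
    rw [← hHdef, hHeq, ← MonoidHom.range_eq_map, Subgroup.range_subtype]
  exact Subgroup.map_injective G₀.subtype_injective this
end

section
/- Let f : G → G₁ be a surjective group homomorphism with finite kernel. Then G has a smallest finite-index subgroup if and only if G₁ has a smallest finite-index subgroup. -/
open scoped Pointwise


/-- A group `G` has a smallest finite-index subgroup if there is a finite-index
subgroup contained in every finite-index subgroup of `G`.
(Index `0` means infinite index.) -/
def HasSmallestFiniteIndexSubgroup (G : Type*) [Group G] : Prop :=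
  ∃ N : Subgroup G, N.index ≠ 0 ∧ ∀ H : Subgroup G, H.index ≠ 0 → N ≤ H

theorem hasSmallestFiniteIndexSubgroup_iff_of_surjective_finite_ker
    {G G₁ : Type*} [Group G] [Group G₁] (f : G →* G₁)
    (hf : Function.Surjective f) (hker : Finite f.ker) :
    HasSmallestFiniteIndexSubgroup G ↔ HasSmallestFiniteIndexSubgroup G₁ := by
  constructor
  · rintro ⟨N, hN0, hNle⟩
    refine ⟨N.map f, ?_, ?_⟩
    · intro h
      have hd := Subgroup.index_map_dvd (H := N) hf
      rw [h] at hd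
      exact hN0 (Nat.eq_zero_of_zero_dvd hd)
    · intro H₁ hH₁
      have hc : (H₁.comap f).index ≠ 0 := by
        rwa [Subgroup.index_comap_of_surjective _ hf]
      have := hNle _ hc
      calc N.map f ≤ (H₁.comap f).map f := Subgroup.map_mono this
        _ = H₁ := Subgroup.map_comap_eq_self_of_surjective hf _
  · rintro ⟨N₁, hN₁0, hN₁le⟩
    set K : Subgroup G := f.ker with hK
    -- the set of intersections H ⊓ K with H of finite index is finite
    have hfin : ((fun H : Subgroup G => H ⊓ K) ''
        {H : Subgroup G | H.index ≠ 0}).Finite := by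
      have hKfin : (K : Set G).Finite := Set.toFinite _
      apply Set.Finite.of_finite_image (f := fun L : Subgroup G => (L : Set G))
      · apply Set.Finite.subset hKfin.finite_subsets
        rintro s ⟨L, ⟨H, -, rfl⟩, rfl⟩
        exact SetLike.coe_mono inf_le_right
      · exact fun a _ b _ h => SetLike.coe_injective h
    obtain ⟨E, hE0, hEmin⟩ :=
      Set.Finite.exists_minimalFor' (fun H : Subgroup G => H ⊓ K)
        {H : Subgroup G | H.index ≠ 0} hfin ⟨⊤, by simp [Subgroup.index_top]⟩
    refine ⟨N₁.comap f ⊓ E, ?_, ?_⟩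
    · exact Subgroup.index_inf_ne_zero
        (by rwa [Subgroup.index_comap_of_surjective _ hf]) hE0
    · intro H hH0
      -- E ⊓ K ≤ H, by minimality applied to H ⊓ E
      have hHE : (H ⊓ E).index ≠ 0 := Subgroup.index_inf_ne_zero hH0 hE0
      have hle : H ⊓ E ⊓ K ≤ E ⊓ K := inf_le_inf_right K inf_le_right
      have heq : E ⊓ K = H ⊓ E ⊓ K := le_antisymm (hEmin (j := H ⊓ E) hHE hle) hle
      have hEK : E ⊓ K ≤ H := by
        rw [heq]; exact le_trans inf_le_left inf_le_left
      -- N₁ ≤ (H ⊓ E).map f since the latter has finite index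
      have hmap0 : ((H ⊓ E).map f).index ≠ 0 := by
        intro h
        have hd := Subgroup.index_map_dvd (H := H ⊓ E) hf
        rw [h] at hd
        exact hHE (Nat.eq_zero_of_zero_dvd hd)
      have h1 : N₁.comap f ≤ ((H ⊓ E).map f).comap f :=
        Subgroup.comap_mono (hN₁le _ hmap0)
      rw [Subgroup.comap_map_eq] at h1
      intro x hx
      obtain ⟨hx1, hxE⟩ := hx
      have hx2 : x ∈ ((H ⊓ E : Subgroup G) : Set G) * (f.ker : Set G) := by
        rw [← Subgroup.mul_normal]
        exact h1 hx1
      obtain ⟨h, hh, k, hk, rfl⟩ := hx2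
      have hkE : k ∈ E := by
        have hxE' : h * k ∈ E := hxE
        have h2 : h⁻¹ * (h * k) ∈ E := mul_mem (inv_mem hh.2) hxE'
        simpa using h2
      exact mul_mem hh.1 (hEK ⟨hkE, hK ▸ hk⟩)
end

section
/- Let A and B be groups, π : A → B a surjective group homomorphism with finite kernel, φ an automorphism of B, and ψ : A → A a group homomorphism such that π(a) = φ(π(ψ(a))) for all a ∈ A. Suppose that the only subgroup C of A with π(C) = B is A itself. Then ψ is bijective (an automorphism of A). -/
theorem lift_automorphism_bijective {A B : Type*} [Group A] [Group B]
    (π : A →* B) (hπ : Function.Surjective π) (hker : Finite π.ker)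
    (φ : MulAut B) (ψ : A →* A)
    (hcomm : ∀ a : A, π a = φ (π (ψ a)))
    (hA : ∀ C : Subgroup A, C.map π = ⊤ → C = ⊤) :
    Function.Bijective ψ := by
  have hπψ : ∀ a : A, π (ψ a) = φ.symm (π a) := by
    intro a
    rw [hcomm a]
    simp
  -- surjectivity
  have hsurj : Function.Surjective ψ := by
    have hrange : ψ.range = ⊤ := by
      apply hA
      rw [Subgroup.eq_top_iff']
      intro b
      obtain ⟨a, ha⟩ := hπ (φ b)
      refine ⟨ψ a, ⟨a, rfl⟩, ?_⟩
      rw [hπψ a, ha]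
      simp
    exact fun a => by
      have : a ∈ ψ.range := hrange ▸ Subgroup.mem_top a
      exact this
  -- ψ maps ker π into ker π
  have hmap : ∀ x : A, x ∈ π.ker → ψ x ∈ π.ker := by
    intro x hx
    rw [MonoidHom.mem_ker] at hx ⊢
    rw [hπψ x, hx]
    simp
  -- and surjectively onto ker π
  let f : π.ker → π.ker := fun x => ⟨ψ x, hmap x x.2⟩
  have hfsurj : Function.Surjective f := by
    rintro ⟨y, hy⟩
    obtain ⟨x, hx⟩ := hsurj y
    have hxker : x ∈ π.ker := by
      rw [MonoidHom.mem_ker] at hy ⊢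
      rw [hcomm x, hx, hy]
      simp
    exact ⟨⟨x, hxker⟩, Subtype.ext hx⟩
  have hfinj : Function.Injective f := Finite.injective_iff_surjective.mpr hfsurj
  have hinj : Function.Injective ψ := by
    rw [injective_iff_map_eq_one]
    intro a ha
    have haker : a ∈ π.ker := by
      rw [MonoidHom.mem_ker, hcomm a, ha]
      simp
    have : f ⟨a, haker⟩ = f 1 := by
      apply Subtype.ext
      simp [f, ha]
    have := hfinj this
    simpa using congrArg Subtype.val this
  exact ⟨hinj, hsurj⟩
end
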